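/- Let V be a d×d real symmetric positive definite matrix, let u ∈ ℝᵈ satisfy ‖u‖₂ ≤ 1 and uᵀ V⁻¹ u ≥ 2, and let p ∈ (0, 1]. Then (2/3) ‖u‖_{V⁻¹}^{2p} ≤ ‖u‖_{V^{−1−p}}² / (1 + ‖u‖_{V⁻¹}²). -/

import Mathlib

open Matrix

lemma quad_form_diag {d : ℕ} (U : Matrix (Fin d) (Fin d) ℝ)
    (hU : U ∈ Matrix.unitaryGroup (Fin d) ℝ) (g : Fin d → ℝ) (u : Fin d → ℝ) :
    u ⬝ᵥ (U * Matrix.diagonal g * star U) *ᵥ u = ∑ i, g i * ((Uᵀ *ᵥ u) i) ^ 2 := by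
  have hstar : star U = Uᵀ := by
    rw [Matrix.star_eq_conjTranspose, Matrix.conjTranspose_eq_transpose_of_trivial]
  set c := Uᵀ *ᵥ u with hc
  rw [hstar, dotProduct_mulVec, ← Matrix.vecMul_vecMul, ← Matrix.vecMul_vecMul]
  have h1 : u ᵥ* U = c := by rw [hc, Matrix.mulVec_transpose]
  rw [h1]
  have h2 : (c ᵥ* Matrix.diagonal g) = fun i => c i * g i := by
    ext i; rw [Matrix.vecMul_diagonal]
  rw [h2]
  rw [Matrix.vecMul_transpose, dotProduct_comm, dotProduct_mulVec, h1]
  simp [dotProduct]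
  ring_nf
  exact Finset.sum_congr rfl fun i _ => by ring

/-- The Mahalanobis norm `‖x‖_B = √(xᵀ B x)`. -/
noncomputable def mnorm {d : ℕ} (B : Matrix (Fin d) (Fin d) ℝ) (x : Fin d → ℝ) : ℝ :=
  Real.sqrt (x ⬝ᵥ B *ᵥ x)

/-- Real matrix power of a symmetric matrix, via the spectral decomposition
(junk value `0` on non-Hermitian matrices). -/
noncomputable def mpow {d : ℕ} (A : Matrix (Fin d) (Fin d) ℝ) (q : ℝ) :
    Matrix (Fin d) (Fin d) ℝ :=
  if hA : A.IsHermitian then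
    (hA.eigenvectorUnitary : Matrix (Fin d) (Fin d) ℝ) *
      Matrix.diagonal (fun i => hA.eigenvalues i ^ q) *
      star (hA.eigenvectorUnitary : Matrix (Fin d) (Fin d) ℝ)
  else 0

/-- Lemma 3 of the paper (Hölder-algebra lemma). -/
theorem holder_algebra {d : ℕ} (V : Matrix (Fin d) (Fin d) ℝ) (hV : V.PosDef)
    (u : Fin d → ℝ) (hu : Real.sqrt (u ⬝ᵥ u) ≤ 1) (hu2 : 2 ≤ u ⬝ᵥ V⁻¹ *ᵥ u)
    (p : ℝ) (hp0 : 0 < p) (hp1 : p ≤ 1) :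
    2 / 3 * mnorm V⁻¹ u ^ (2 * p) ≤
      mnorm (mpow V (-1 - p)) u ^ 2 / (1 + mnorm V⁻¹ u ^ 2) := by
  classical
  have hA := hV.1
  have hUmem : (hA.eigenvectorUnitary : Matrix (Fin d) (Fin d) ℝ) ∈
      Matrix.unitaryGroup (Fin d) ℝ := hA.eigenvectorUnitary.2
  set U : Matrix (Fin d) (Fin d) ℝ := (hA.eigenvectorUnitary : Matrix (Fin d) (Fin d) ℝ) with hUdef
  set lam : Fin d → ℝ := hA.eigenvalues with hlamdef
  have hlpos : ∀ i, 0 < lam i := fun i => hV.eigenvalues_pos i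
  set c : Fin d → ℝ := Uᵀ *ᵥ u with hc
  have hstar : star U = Uᵀ := by
    rw [Matrix.star_eq_conjTranspose, Matrix.conjTranspose_eq_transpose_of_trivial]
  have hspec : V = U * Matrix.diagonal lam * star U := by
    have := hA.spectral_theorem
    simpa [RCLike.ofReal_real_eq_id, Function.comp_def] using this
  -- inverse
  have hUU : star U * U = 1 := (Matrix.mem_unitaryGroup_iff').mp hUmem
  have hUU' : U * star U = 1 := (Matrix.mem_unitaryGroup_iff).mp hUmem
  have hinv : V⁻¹ = U * Matrix.diagonal (fun i => (lam i)⁻¹) * star U := by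
    apply Matrix.inv_eq_right_inv
    rw [hspec]
    calc U * Matrix.diagonal lam * star U * (U * Matrix.diagonal (fun i => (lam i)⁻¹) * star U)
        = U * (Matrix.diagonal lam * (star U * U) * Matrix.diagonal (fun i => (lam i)⁻¹)) * star U := by
          noncomm_ring
      _ = U * (Matrix.diagonal lam * Matrix.diagonal (fun i => (lam i)⁻¹)) * star U := by
          rw [hUU, mul_one]
      _ = U * star U := by
          rw [Matrix.diagonal_mul_diagonal]
          have : (fun i => lam i * (lam i)⁻¹) = fun _ : Fin d => (1:ℝ) := by
            funext i; exact mul_inv_cancel₀ (hlpos i).ne'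
          rw [this, Matrix.diagonal_one, mul_one]
      _ = 1 := hUU'
  -- quadratic forms
  set S : ℝ := ∑ i, (lam i)⁻¹ * c i ^ 2 with hSdef
  set T : ℝ := ∑ i, lam i ^ (-1 - p : ℝ) * c i ^ 2 with hTdef
  set m : ℝ := ∑ i, c i ^ 2 with hmdef
  have hS : u ⬝ᵥ V⁻¹ *ᵥ u = S := by rw [hinv]; exact quad_form_diag U hUmem _ u
  have hT : u ⬝ᵥ (mpow V (-1 - p)) *ᵥ u = T := by
    show u ⬝ᵥ (dite _ _ _ : Matrix (Fin d) (Fin d) ℝ) *ᵥ u = T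
    rw [dif_pos hA]
    exact quad_form_diag U hUmem _ u
  have hm : u ⬝ᵥ u = m := by
    have h1 : u ⬝ᵥ (U * Matrix.diagonal (fun _ : Fin d => (1:ℝ)) * star U) *ᵥ u
        = ∑ i, (1:ℝ) * c i ^ 2 := quad_form_diag U hUmem _ u
    rw [Matrix.diagonal_one, mul_one, hUU', Matrix.one_mulVec] at h1
    simpa using h1
  -- scalar facts
  have hS2 : 2 ≤ S := hS ▸ hu2
  have hm0 : 0 ≤ m := Finset.sum_nonneg fun i _ => sq_nonneg _
  have hm1 : m ≤ 1 := by
    nlinarith [Real.sq_sqrt (hm ▸ hm0 : 0 ≤ u ⬝ᵥ u), Real.sqrt_nonneg (u ⬝ᵥ u), hm]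
  have hSnn : (0:ℝ) ≤ S := by linarith
  have hTnn : (0:ℝ) ≤ T :=
    Finset.sum_nonneg fun i _ => mul_nonneg (Real.rpow_nonneg (hlpos i).le _) (sq_nonneg _)
  have hmpos : 0 < m := by
    rcases lt_or_eq_of_le hm0 with h | h
    · exact h
    · exfalso
      have hall : ∀ i ∈ Finset.univ, c i ^ 2 = 0 :=
        (Finset.sum_eq_zero_iff_of_nonneg (fun i _ => sq_nonneg (c i))).mp h.symm
      have : S = 0 := Finset.sum_eq_zero fun i hi => by rw [hall i hi, mul_zero]
      linarith
  -- Jensen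
  have hjen := (convexOn_rpow (p := 1 + p) (by linarith)).map_sum_le
    (t := Finset.univ) (w := fun i => c i ^ 2 / m) (p := fun i => (lam i)⁻¹)
    (fun i _ => div_nonneg (sq_nonneg _) hm0)
    (by rw [← Finset.sum_div, ← hmdef, div_self hmpos.ne'])
    (fun i _ => Set.mem_Ici.mpr (inv_nonneg.mpr (hlpos i).le))
  have hsum1 : ∑ i, (c i ^ 2 / m) • (lam i)⁻¹ = S / m := by
    rw [hSdef, Finset.sum_div]
    exact Finset.sum_congr rfl fun i _ => by rw [smul_eq_mul]; ring
  have hsum2 : ∑ i, (c i ^ 2 / m) • ((lam i)⁻¹ ^ (1 + p : ℝ)) = T / m := by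
    rw [hTdef, Finset.sum_div]
    refine Finset.sum_congr rfl fun i _ => ?_
    rw [smul_eq_mul, Real.inv_rpow (hlpos i).le, ← Real.rpow_neg (hlpos i).le]
    rw [show -(1 + p) = -1 - p by ring]
    ring
  rw [hsum1, hsum2] at hjen
  -- S^(1+p) ≤ T
  have hST : S ^ (1 + p : ℝ) ≤ T := by
    have h1 : S ^ (1 + p : ℝ) = m ^ (1 + p : ℝ) * (S / m) ^ (1 + p : ℝ) := by
      rw [← Real.mul_rpow hm0 (div_nonneg hSnn hm0), mul_div_cancel₀ _ hmpos.ne']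
    have h2 : m ^ (1 + p : ℝ) * (S / m) ^ (1 + p : ℝ) ≤ m ^ (1 + p : ℝ) * (T / m) :=
      mul_le_mul_of_nonneg_left hjen (Real.rpow_nonneg hm0 _)
    have h3 : m ^ (1 + p : ℝ) * (T / m) = m ^ (p : ℝ) * T := by
      rw [Real.rpow_add hmpos, Real.rpow_one]
      field_simp
    have h4 : m ^ (p : ℝ) ≤ 1 := Real.rpow_le_one hm0 hm1 hp0.le
    nlinarith [Real.rpow_nonneg hm0 (p : ℝ)]
  -- rewrite the goal
  have hg1 : mnorm V⁻¹ u = Real.sqrt S := by rw [mnorm, hS]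
  have hg2 : mnorm V⁻¹ u ^ 2 = S := by rw [hg1, Real.sq_sqrt hSnn]
  have hg3 : mnorm V⁻¹ u ^ (2 * p : ℝ) = S ^ (p : ℝ) := by
    rw [hg1, Real.sqrt_eq_rpow, ← Real.rpow_mul hSnn,
      show (1/2 : ℝ) * (2 * p) = p by ring]
  have hg4 : mnorm (mpow V (-1 - p)) u ^ 2 = T := by
    rw [mnorm, hT, Real.sq_sqrt hTnn]
  rw [hg2, hg3, hg4, le_div_iff₀ (by linarith : (0:ℝ) < 1 + S)]
  have hSp : 0 < S ^ (p : ℝ) := Real.rpow_pos_of_pos (by linarith) _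
  have hkey : S ^ (p : ℝ) * S = S ^ (1 + p : ℝ) := by
    rw [Real.rpow_add (by linarith : (0:ℝ) < S), Real.rpow_one]; ring
  nlinarith [mul_le_mul_of_nonneg_left (show 2 / 3 * (1 + S) ≤ S by linarith) hSp.le]
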